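/- Let C be a unital C*-algebra whose unit is properly infinite and whose Cuntz semigroup W(C) is almost unperforated. Then every full positive element A ∈ C satisfies: there exists X ∈ C with X A X* = 1. (In particular, a nonunital σ-unital C*-algebra B whose corona C(B) is properly infinite with W(C(B)) almost unperforated has the strong corona factorization property.) -/

import Mathlib

open Filter Matrix

/-- Cuntz subequivalence of positive matrices over a C*-algebra. -/
def cuntzLE {C : Type*} [NonUnitalRing C] [StarRing C] [TopologicalSpace C]
    {I J : Type*} [Fintype I] [Fintype J]
    (a : Matrix I I C) (b : Matrix J J C) : Prop :=
  ∃ x : ℕ → Matrix I J C,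
    Tendsto (fun m => x m * b * (x m)ᴴ) atTop (nhds a)

lemma invSqrt_aux {C : Type*} [CStarAlgebra C]
    [PartialOrder C] [StarOrderedRing C] (u : C) (hu : 0 ≤ u) (hinv : IsUnit u) :
    ∃ z : C, IsSelfAdjoint z ∧ z * u * z = 1 ∧ z * u = u * z := by
  have hsa : IsSelfAdjoint u := hu.isSelfAdjoint
  have hspec : ∀ t ∈ spectrum ℝ u, 0 < t := by
    intro t ht
    rcases (spectrum_nonneg_of_nonneg hu ht).lt_or_eq with h | h
    · exact h
    · exact absurd hinv (by rw [← spectrum.zero_notMem_iff ℝ]; simpa [← h] using ht)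
  set f : ℝ → ℝ := fun t => (Real.sqrt t)⁻¹ with hf
  have hcont : ContinuousOn f (spectrum ℝ u) := by
    apply ContinuousOn.inv₀ (Real.continuous_sqrt.continuousOn)
    exact fun t ht => ne_of_gt (Real.sqrt_pos.2 (hspec t ht))
  have e1 : cfc (fun t => f t * t) u = cfc f u * u := by
    rw [cfc_mul f (fun t : ℝ => t) u hcont (continuousOn_id), cfc_id' ℝ u hsa]
  have e2 : cfc (fun t => t * f t) u = u * cfc f u := by
    rw [cfc_mul (fun t : ℝ => t) f u (continuousOn_id) hcont, cfc_id' ℝ u hsa]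
  have hcont2 : ContinuousOn (fun t => f t * t) (spectrum ℝ u) :=
    hcont.mul (continuousOn_id)
  have e3 : cfc (fun t => f t * t * f t) u = cfc f u * u * cfc f u := by
    rw [cfc_mul (fun t => f t * t) f u hcont2 hcont, e1]
  refine ⟨cfc f u, IsSelfAdjoint.cfc, ?_, ?_⟩
  · rw [← e3, ← cfc_const_one ℝ u hsa]
    apply cfc_congr
    intro t ht
    have h1 : 0 < t := hspec t ht
    have h2 : Real.sqrt t ≠ 0 := ne_of_gt (Real.sqrt_pos.2 h1)
    simp only [hf]
    field_simp
    rw [Real.sq_sqrt h1.le]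
  · rw [← e1, ← e2]
    exact cfc_congr fun t _ => mul_comm _ _

lemma nearOne_aux {C : Type*} [CStarAlgebra C] [Nontrivial C]
    [PartialOrder C] [StarOrderedRing C] (u : C) (hu : 0 ≤ u) (h : ‖u - 1‖ < 1) :
    ∃ z : C, IsSelfAdjoint z ∧ z * u * z = 1 ∧ ‖z‖ * ‖z‖ ≤ (1 - ‖u - 1‖)⁻¹ := by
  have h' : ‖1 - u‖ < 1 := by rwa [norm_sub_rev]
  have hinv : IsUnit u := sub_sub_self 1 u ▸ (Units.oneSub (1 - u) h').isUnit
  obtain ⟨z, hz, hz1, hz2⟩ := invSqrt_aux u hu hinv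
  have hzz : z * z * u = 1 := by
    calc z * z * u = z * (z * u) := by rw [mul_assoc]
    _ = z * (u * z) := by rw [hz2]
    _ = 1 := by rw [← mul_assoc]; exact hz1
  have hb : ‖z * z‖ ≤ (1 - ‖u - 1‖)⁻¹ := by
    have step : ‖z * z‖ ≤ ‖z * z‖ * ‖1 - u‖ + 1 := by
      calc ‖z * z‖ = ‖z * z * (1 - u) + z * z * u‖ := by
            congr 1; noncomm_ring
      _ ≤ ‖z * z * (1 - u)‖ + ‖z * z * u‖ := norm_add_le _ _
      _ ≤ ‖z * z‖ * ‖1 - u‖ + 1 := by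
          rw [hzz, norm_one]
          gcongr
          exact norm_mul_le _ _
    have hpos : (0:ℝ) < 1 - ‖u - 1‖ := by linarith
    rw [inv_eq_one_div, le_div_iff₀ hpos]
    rw [norm_sub_rev 1 u] at step
    nlinarith [norm_nonneg (z*z)]
  refine ⟨z, hz, hz1, ?_⟩
  calc ‖z‖ * ‖z‖ = ‖z * star z‖ := (CStarRing.norm_self_mul_star).symm
  _ = ‖z * z‖ := by rw [hz]
  _ ≤ _ := hb

lemma orth_step {C : Type*} [Ring C] [StarRing C] (v w0 g : C)
    (hvv : star v * v = 1) (hww : star w0 * w0 = 1)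
    (hg : star v * w0 = g) (hg' : star w0 * v = star g) :
    star (w0 - v * g) * (w0 - v * g) = 1 - star g * g := by
  have h1 : star (w0 - v * g) = star w0 - star g * star v := by rw [star_sub, StarMul.star_mul]
  rw [h1, sub_mul, mul_sub, mul_sub, hww]
  have e2 : star w0 * (v * g) = star g * g := by rw [← mul_assoc, hg']
  have e3 : star g * star v * w0 = star g * g := by rw [mul_assoc, hg]
  have e4 : star g * star v * (v * g) = star g * g := by
    rw [mul_assoc, ← mul_assoc (star v), hvv, one_mul]
  rw [e2, e3, e4]
  abel

lemma pair_isom_aux {C : Type*} [CStarAlgebra C] [Nontrivial C]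
    [PartialOrder C] [StarOrderedRing C] (a b : C)
    (ha : ‖a * star a - 1‖ < 1/8) (hb : ‖b * star b - 1‖ < 1/8)
    (hab : ‖a * star b‖ < 1/8) :
    ∃ v w : C, star v * v = 1 ∧ star w * w = 1 ∧ star v * w = 0 := by
  have hbound : ∀ u : C, 0 ≤ u → ‖u - 1‖ < 1/8 →
      ∃ z : C, IsSelfAdjoint z ∧ z * u * z = 1 ∧ ‖z‖ * ‖z‖ ≤ 2 := by
    intro u hu h
    obtain ⟨z, hzsa, hz1, hzb⟩ := nearOne_aux u hu (by linarith)
    refine ⟨z, hzsa, hz1, hzb.trans ?_⟩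
    have h2 : (1:ℝ)/2 ≤ 1 - ‖u - 1‖ := by linarith
    calc (1 - ‖u - 1‖)⁻¹ ≤ ((1:ℝ)/2)⁻¹ := by
          apply inv_anti₀ (by norm_num) h2
    _ = 2 := by norm_num
  obtain ⟨z, hzsa, hz1, hz2⟩ := hbound (a * star a) (mul_star_self_nonneg a) ha
  obtain ⟨z', hzsa', hz1', hz2'⟩ := hbound (b * star b) (mul_star_self_nonneg b) hb
  set v : C := star a * z with hv
  set w0 : C := star b * z' with hw0
  have hsv : star v = z * a := by rw [hv, StarMul.star_mul, star_star, hzsa.star_eq]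
  have hsw0 : star w0 = z' * b := by rw [hw0, StarMul.star_mul, star_star, hzsa'.star_eq]
  have hvv : star v * v = 1 := by
    rw [hsv, hv]
    calc z * a * (star a * z) = z * (a * star a) * z := by simp [mul_assoc]
    _ = 1 := hz1
  have hww0 : star w0 * w0 = 1 := by
    rw [hsw0, hw0]
    calc z' * b * (star b * z') = z' * (b * star b) * z' := by simp [mul_assoc]
    _ = 1 := hz1'
  set g : C := star v * w0 with hg
  have hgf : g = z * (a * star b) * z' := by rw [hg, hsv, hw0]; simp [mul_assoc]
  have hgn : ‖g‖ * ‖g‖ < 1 := by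
    have h1 : ‖g‖ ≤ ‖z‖ * ‖a * star b‖ * ‖z'‖ := by
      rw [hgf]
      calc ‖z * (a * star b) * z'‖ ≤ ‖z * (a * star b)‖ * ‖z'‖ := norm_mul_le _ _
      _ ≤ ‖z‖ * ‖a * star b‖ * ‖z'‖ := by gcongr; exact norm_mul_le _ _
    have h2 : ‖g‖ * ‖g‖ ≤ (‖z‖ * ‖a * star b‖ * ‖z'‖) * (‖z‖ * ‖a * star b‖ * ‖z'‖) :=
      mul_le_mul h1 h1 (norm_nonneg g) (by positivity)
    calc ‖g‖ * ‖g‖ ≤ (‖z‖ * ‖a * star b‖ * ‖z'‖) * (‖z‖ * ‖a * star b‖ * ‖z'‖) := h2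
    _ = (‖z‖ * ‖z‖) * ((‖a * star b‖ * ‖a * star b‖) * (‖z'‖ * ‖z'‖)) := by ring
    _ ≤ 2 * (((1:ℝ)/8 * (1/8)) * 2) := by
        have hq : ‖a * star b‖ * ‖a * star b‖ ≤ (1:ℝ)/8 * (1/8) :=
          mul_le_mul hab.le hab.le (norm_nonneg _) (by norm_num)
        have := mul_le_mul hq hz2' (by positivity) (by norm_num)
        exact mul_le_mul hz2 this (by positivity) (by norm_num)
    _ < 1 := by norm_num
  set c : C := w0 - v * g with hc
  have hvc : star v * c = 0 := by
    rw [hc, mul_sub, ← hg, ← mul_assoc, hvv, one_mul, sub_self]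
  have hcc : star c * c = 1 - star g * g := by
    have hwv : star w0 * v = star g := by
      rw [hg]; conv_rhs => rw [StarMul.star_mul, star_star]
    rw [hc]
    exact orth_step v w0 g hvv hww0 hg.symm hwv
  have hdn : ‖star c * c - 1‖ < 1 := by
    rw [hcc]
    calc ‖1 - star g * g - 1‖ = ‖star g * g‖ := by rw [sub_sub_cancel_left, norm_neg]
    _ = ‖g‖ * ‖g‖ := CStarRing.norm_star_mul_self
    _ < 1 := hgn
  obtain ⟨z'', hzsa'', hz1'', _⟩ := nearOne_aux (star c * c) (star_mul_self_nonneg c) hdn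
  refine ⟨v, c * z'', hvv, ?_, ?_⟩
  · rw [StarMul.star_mul, hzsa''.star_eq]
    calc z'' * star c * (c * z'') = z'' * (star c * c) * z'' := by simp [mul_assoc]
    _ = 1 := hz1''
  · rw [← mul_assoc, hvc, zero_mul]

lemma delta_aux {C : Type*} [Ring C] [StarRing C] (v w : C)
    (hv : star v * v = 1) (hw : star w * w = 1) (hvw : star v * w = 0) (i j : ℕ) :
    star (v ^ i * w) * (v ^ j * w) = if i = j then 1 else 0 := by
  have hwv : star w * v = 0 := by
    have := congrArg star hvw
    rwa [StarMul.star_mul, star_star, star_zero] at this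
  have hpow : ∀ n : ℕ, (star v) ^ n * v ^ n = 1 := by
    intro n
    induction n with
    | zero => simp
    | succ n ih =>
      rw [pow_succ, pow_succ']
      calc (star v) ^ n * star v * (v * v ^ n)
          = (star v) ^ n * (star v * v) * v ^ n := by simp [mul_assoc]
      _ = 1 := by rw [hv, mul_one, ih]
  have hzero : ∀ d : ℕ, star w * (v ^ (d + 1) * w) = 0 := by
    intro d
    rw [pow_succ', mul_assoc, ← mul_assoc (star w), hwv, zero_mul]
  have key : ∀ i d : ℕ, star (v ^ i * w) * (v ^ (i + d) * w) = if d = 0 then 1 else 0 := by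
    intro i d
    have e : star (v ^ i * w) * (v ^ (i + d) * w) = star w * (v ^ d * w) := by
      calc star (v ^ i * w) * (v ^ (i + d) * w)
          = star w * ((star v) ^ i * (v ^ i * (v ^ d * w))) := by
            rw [StarMul.star_mul, star_pow, pow_add]; simp [mul_assoc]
      _ = star w * ((star v) ^ i * v ^ i * (v ^ d * w)) := by rw [mul_assoc ((star v)^i)]
      _ = star w * (v ^ d * w) := by rw [hpow, one_mul]
    rw [e]
    rcases d with _ | d
    · simpa using hw
    · simpa using hzero d
  rcases le_or_gt i j with h | h
  · obtain ⟨d, rfl⟩ := Nat.exists_eq_add_of_le h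
    rw [key]
    by_cases hd : d = 0 <;> simp [hd]
  · have h0 : star (v ^ j * w) * (v ^ i * w) = 0 := by
      obtain ⟨d, rfl⟩ : ∃ d, i = j + (d + 1) := ⟨i - j - 1, by omega⟩
      rw [key]; simp
    have h1 := congrArg star h0
    rw [StarMul.star_mul, star_star, star_zero] at h1
    rw [h1, if_neg (by omega)]

theorem stmt_10 {C : Type*} [NormedRing C] [StarRing C] [CStarRing C]
    [NormedAlgebra ℂ C] [CompleteSpace C] [StarModule ℂ C]
    [PartialOrder C] [StarOrderedRing C]
    (hpi : cuntzLE
      (Matrix.blockDiagonal fun _ : Fin 2 => Matrix.diagonal fun _ : Fin 1 => (1 : C))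
      (Matrix.diagonal fun _ : Fin 1 => (1 : C)))
    (hau : ∀ (j l n m : ℕ) (a : Matrix (Fin j) (Fin j) C) (b : Matrix (Fin l) (Fin l) C),
      (∃ c, a = cᴴ * c) → (∃ c, b = cᴴ * c) → m < n →
      cuntzLE (Matrix.blockDiagonal fun _ : Fin n => a)
        (Matrix.blockDiagonal fun _ : Fin m => b) →
      cuntzLE a b)
    (A : C) (hA : 0 ≤ A)
    (hfull : ∃ (k : ℕ) (X : Fin k → C), ∑ n, X n * A * star (X n) = 1) :
    ∃ x : C, x * A * star x = 1 := by
  letI : CStarAlgebra C :=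
    { ‹NormedRing C›, ‹StarRing C›, ‹CStarRing C›, ‹NormedAlgebra ℂ C›,
      ‹StarModule ℂ C›, ‹CompleteSpace C› with }
  rcases subsingleton_or_nontrivial C with htriv | hnt
  · exact ⟨0, Subsingleton.elim _ _⟩
  -- Step 1: extract entrywise approximations from `hpi`
  obtain ⟨x, hx⟩ := hpi
  have hent : ∀ p q : Fin 1 × Fin 2,
      Tendsto (fun m => x m p 0 * star (x m q 0)) atTop
        (nhds (if p.2 = q.2 then 1 else 0)) := by
    intro p q
    have hc : Continuous (fun M : Matrix (Fin 1 × Fin 2) (Fin 1 × Fin 2) C => M p q) :=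
      (continuous_apply q).comp (continuous_apply p)
    have h2 : Tendsto (fun m => ((x m * (Matrix.diagonal fun _ : Fin 1 => (1:C)) * (x m)ᴴ)) p q)
        atTop (nhds ((Matrix.blockDiagonal fun _ : Fin 2 =>
          Matrix.diagonal fun _ : Fin 1 => (1 : C)) p q)) := (hc.tendsto _).comp hx
    have e1 : ∀ m, ((x m * (Matrix.diagonal fun _ : Fin 1 => (1:C)) * (x m)ᴴ)) p q
        = x m p 0 * star (x m q 0) := by
      intro m
      simp [Matrix.mul_apply, Matrix.conjTranspose_apply, Fin.sum_univ_one]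
    have e2 : (Matrix.blockDiagonal fun _ : Fin 2 =>
        Matrix.diagonal fun _ : Fin 1 => (1 : C)) p q = if p.2 = q.2 then 1 else 0 := by
      obtain ⟨p1, p2⟩ := p; obtain ⟨q1, q2⟩ := q
      simp [Matrix.blockDiagonal_apply, Matrix.diagonal_apply, Fin.fin_one_eq_zero]
    rw [← e2]
    simpa only [e1] using h2
  -- Step 2: pick a good index
  have hpick : ∃ a b : C, ‖a * star a - 1‖ < 1/8 ∧ ‖b * star b - 1‖ < 1/8 ∧
      ‖a * star b‖ < 1/8 := by
    obtain ⟨N1, h1⟩ := Metric.tendsto_atTop.mp (hent (0,0) (0,0)) (1/8) (by norm_num)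
    obtain ⟨N2, h2⟩ := Metric.tendsto_atTop.mp (hent (0,1) (0,1)) (1/8) (by norm_num)
    obtain ⟨N3, h3⟩ := Metric.tendsto_atTop.mp (hent (0,0) (0,1)) (1/8) (by norm_num)
    set N := max (max N1 N2) N3 with hNdef
    refine ⟨x N (0,0) 0, x N (0,1) 0, ?_, ?_, ?_⟩
    · have := h1 N (le_trans (le_max_left N1 N2) (le_max_left _ N3))
      simpa [dist_eq_norm] using this
    · have := h2 N (le_trans (le_max_right N1 N2) (le_max_left _ N3))
      simpa [dist_eq_norm] using this
    · have := h3 N (le_max_right _ N3)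
      simpa [dist_eq_norm] using this
  obtain ⟨a, b, ha, hb, hab⟩ := hpick
  obtain ⟨v, w, hv, hw, hvw⟩ := pair_isom_aux a b ha hb hab
  have delta := delta_aux v w hv hw hvw
  -- Step 3: the full element
  obtain ⟨k, X, hX⟩ := hfull
  -- matrices
  set amat : Matrix (Fin 1) (Fin 1) C := fun _ _ => 1 with hamat
  set bmat : Matrix (Fin 1) (Fin 1) C := fun _ _ => A with hbmat
  set W : Matrix (Fin 1 × Fin (k+1)) (Fin 1 × Fin k) C :=
    fun p q => star (v ^ (p.2 : ℕ) * w) * X q.2 with hW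
  have hmat : W * (Matrix.blockDiagonal fun _ : Fin k => bmat) * Wᴴ
      = Matrix.blockDiagonal fun _ : Fin (k+1) => amat := by
    ext p q
    obtain ⟨i0, i⟩ := p
    obtain ⟨i0', i'⟩ := q
    have hWB : ∀ s : Fin 1 × Fin k,
        (W * Matrix.blockDiagonal fun _ : Fin k => bmat) (i0, i) s
          = W (i0, i) (0, s.2) * A := by
      intro s
      rw [Matrix.mul_apply, Fintype.sum_prod_type]
      simp [Matrix.blockDiagonal_apply, mul_ite, mul_zero, Finset.sum_ite_eq',
        Fin.sum_univ_one]
      simp [hbmat]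
    have hR : (Matrix.blockDiagonal fun _ : Fin (k+1) => amat) (i0,i) (i0',i')
        = if i = i' then (1:C) else 0 := by
      simp [Matrix.blockDiagonal_apply]
      simp [hamat]
    rw [hR]
    calc (W * (Matrix.blockDiagonal fun _ : Fin k => bmat) * Wᴴ) (i0,i) (i0',i')
        = ∑ s : Fin 1 × Fin k,
            (W * Matrix.blockDiagonal fun _ : Fin k => bmat) (i0,i) s
              * star (W (i0',i') s) := by
          simp [Matrix.mul_apply, Matrix.conjTranspose_apply]
    _ = ∑ j : Fin k, star (v ^ (i:ℕ) * w) * (X j * A * star (X j)) * (v ^ (i':ℕ) * w) := by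
          rw [Fintype.sum_prod_type, Fin.sum_univ_one]
          apply Finset.sum_congr rfl
          intro j _
          rw [hWB]
          simp only [hW]
          simp [StarMul.star_mul, star_star, mul_assoc]
    _ = star (v ^ (i:ℕ) * w) * (∑ j, X j * A * star (X j)) * (v ^ (i':ℕ) * w) := by
          rw [Finset.mul_sum, Finset.sum_mul]
    _ = star (v ^ (i:ℕ) * w) * (v ^ (i':ℕ) * w) := by rw [hX, mul_one]
    _ = if i = i' then 1 else 0 := by
          rw [delta]
          simp [Fin.val_eq_val]
  have hcz : cuntzLE (Matrix.blockDiagonal fun _ : Fin (k+1) => amat)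
      (Matrix.blockDiagonal fun _ : Fin k => bmat) := by
    exact ⟨fun _ => W, by simpa only [hmat] using tendsto_const_nhds⟩
  have hsq : ∃ s : C, star s * s = A :=
    ⟨CFC.sqrt A, by rw [(CFC.sqrt_nonneg (a := A)).isSelfAdjoint.star_eq,
      CFC.sqrt_mul_sqrt_self A hA]⟩
  obtain ⟨s, hs⟩ := hsq
  have hamat_pos : ∃ c, amat = cᴴ * c := by
    refine ⟨amat, ?_⟩
    ext i j
    simp [Matrix.mul_apply, Matrix.conjTranspose_apply, Fin.sum_univ_one]
    simp [hamat]
  have hbmat_pos : ∃ c, bmat = cᴴ * c := by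
    refine ⟨fun _ _ => s, ?_⟩
    ext i j
    show A = ∑ _x : Fin 1, star s * s
    rw [Fin.sum_univ_one, hs]
  have hfin := hau 1 1 (k+1) k amat bmat hamat_pos hbmat_pos (Nat.lt_succ_self k) hcz
  obtain ⟨y, hy⟩ := hfin
  have hyent : Tendsto (fun m => y m 0 0 * A * star (y m 0 0)) atTop (nhds 1) := by
    have hc : Continuous (fun M : Matrix (Fin 1) (Fin 1) C => M 0 0) :=
      (continuous_apply (0 : Fin 1)).comp (continuous_apply (0 : Fin 1))
    have h2 : Tendsto (fun m => (y m * bmat * (y m)ᴴ) 0 0) atTop (nhds (amat 0 0)) :=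
      (hc.tendsto _).comp hy
    have e1 : ∀ m, (y m * bmat * (y m)ᴴ) 0 0 = y m 0 0 * A * star (y m 0 0) := by
      intro m
      simp [Matrix.mul_apply, Matrix.conjTranspose_apply, Fin.sum_univ_one]
      simp [hbmat]
    have e2 : amat 0 0 = 1 := rfl
    rw [← e2]
    simpa only [e1] using h2
  -- Step 4: conclude
  obtain ⟨N, hN⟩ := Metric.tendsto_atTop.mp hyent (1/2) (by norm_num)
  set y0 : C := y N 0 0 with hy0
  have hu : 0 ≤ y0 * A * star y0 := star_right_conjugate_nonneg hA y0
  have hun : ‖y0 * A * star y0 - 1‖ < 1 := by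
    have := hN N (le_refl N)
    rw [dist_eq_norm] at this
    calc ‖y0 * A * star y0 - 1‖ < 1/2 := this
    _ < 1 := by norm_num
  obtain ⟨z, hzsa, hz1, _⟩ := nearOne_aux (y0 * A * star y0) hu hun
  refine ⟨z * y0, ?_⟩
  calc z * y0 * A * star (z * y0) = z * y0 * A * (star y0 * z) := by
        rw [StarMul.star_mul, hzsa.star_eq]
  _ = z * (y0 * A * star y0) * z := by simp [mul_assoc]
  _ = 1 := hz1
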